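/- For the open Toda lattice of dimension 2k+1 (k ≥ 1) and any point v ∈ ℂ^{2k+1}, the rank of the antisymmetric (2k+1)×(2k+1) matrix Π₁(v) equals 2k − 2d, where d is the number of indices l ∈ {0, …, k−1} with v_{2l+1} = 0. -/

import Mathlib

open Matrix

noncomputable section

/-- The first open Toda bracket matrix `Π₁` evaluated at the point `v`. -/
def toda1C (k : ℕ) (v : Fin (2 * k + 1) → ℂ) :
    Matrix (Fin (2 * k + 1)) (Fin (2 * k + 1)) ℂ :=
  Matrix.of fun i j =>
    if j.val = i.val + 1 then (if Even i.val then -v j else -v i)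
    else if i.val = j.val + 1 then (if Even j.val then v i else v j)
    else 0

namespace Toda1Aux

lemma sum_eq_pair {n : ℕ} (f : Fin n → ℂ) (a b : Fin n) (hab : a ≠ b)
    (h : ∀ j, j ≠ a → j ≠ b → f j = 0) : ∑ j, f j = f a + f b := by
  classical
  rw [← Finset.sum_pair hab]
  refine (Finset.sum_subset (Finset.subset_univ _) ?_).symm
  intro j _ hj
  simp only [Finset.mem_insert, Finset.mem_singleton, not_or] at hj
  exact h j hj.1 hj.2

lemma sum_eq_single' {n : ℕ} (f : Fin n → ℂ) (a : Fin n)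
    (h : ∀ j, j ≠ a → f j = 0) : ∑ j, f j = f a :=
  Finset.sum_eq_single a (fun j _ hj => h j hj) (by simp)

variable {k : ℕ} (v : Fin (2 * k + 1) → ℂ)

lemma row_zero (hk : 1 ≤ k) (x : Fin (2 * k + 1) → ℂ) :
    (toda1C k v).mulVec x ⟨0, by omega⟩
      = -(v ⟨1, by omega⟩ * x ⟨1, by omega⟩) := by
  have h1 : (1:ℕ) < 2 * k + 1 := by omega
  simp only [Matrix.mulVec, dotProduct]
  rw [sum_eq_single' _ ⟨1, h1⟩]
  · simp [toda1C]
  · intro j hj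
    have hj' : j.val ≠ 1 := by
      simpa [Fin.ext_iff] using hj
    simp only [toda1C, Matrix.of_apply]
    rw [if_neg (by omega), if_neg (by omega), zero_mul]

lemma row_odd (x : Fin (2 * k + 1) → ℂ) (l : ℕ) (hl : l < k) :
    (toda1C k v).mulVec x ⟨2 * l + 1, by omega⟩
      = v ⟨2 * l + 1, by omega⟩ * (x ⟨2 * l, by omega⟩ - x ⟨2 * l + 2, by omega⟩) := by
  have ha : (2 * l : ℕ) < 2 * k + 1 := by omega
  have hb : (2 * l + 2 : ℕ) < 2 * k + 1 := by omega
  simp only [Matrix.mulVec, dotProduct]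
  rw [sum_eq_pair _ ⟨2 * l, ha⟩ ⟨2 * l + 2, hb⟩ (Fin.ne_of_val_ne (by simp only [Fin.val_mk]; omega))]
  · have hodd : ¬ Even (2 * l + 1) := by rw [Nat.even_iff]; omega
    have heven : Even (2 * l) := even_two_mul l
    have hc : ¬ (2 * l = 2 * l + 1 + 1) := by omega
    simp only [toda1C, Matrix.of_apply]
    simp only [if_neg hc, if_true, if_pos heven, if_neg hodd, eq_self_iff_true]
    ring
  · intro j hja hjb
    have hja' : j.val ≠ 2 * l := by simpa [Fin.ext_iff] using hja
    have hjb' : j.val ≠ 2 * l + 2 := by simpa [Fin.ext_iff] using hjb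
    simp only [toda1C, Matrix.of_apply]
    rw [if_neg (by omega), if_neg (by omega), zero_mul]

lemma row_even_mid (x : Fin (2 * k + 1) → ℂ) (l : ℕ) (hl : l + 1 < k) :
    (toda1C k v).mulVec x ⟨2 * l + 2, by omega⟩
      = v ⟨2 * l + 1, by omega⟩ * x ⟨2 * l + 1, by omega⟩
        - v ⟨2 * l + 3, by omega⟩ * x ⟨2 * l + 3, by omega⟩ := by
  have ha : (2 * l + 1 : ℕ) < 2 * k + 1 := by omega
  have hb : (2 * l + 3 : ℕ) < 2 * k + 1 := by omega
  simp only [Matrix.mulVec, dotProduct]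
  rw [sum_eq_pair _ ⟨2 * l + 1, ha⟩ ⟨2 * l + 3, hb⟩ (Fin.ne_of_val_ne (by simp only [Fin.val_mk]; omega))]
  · have hodd : ¬ Even (2 * l + 1) := by rw [Nat.even_iff]; omega
    have heven : Even (2 * l + 2) := by rw [Nat.even_iff]; omega
    have hc1 : ¬ (2 * l + 1 = 2 * l + 2 + 1) := by omega
    have hc2 : (2 * l + 3 = 2 * l + 2 + 1) := by omega
    have hc3 : (2 * l + 2 = 2 * l + 1 + 1) := by omega
    simp only [toda1C, Matrix.of_apply]
    simp only [if_neg hc1, if_pos hc2, if_pos hc3, if_true, if_false,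
      if_pos heven, if_neg hodd, eq_self_iff_true]
    ring
  · intro j hja hjb
    have hja' : j.val ≠ 2 * l + 1 := by simpa [Fin.ext_iff] using hja
    have hjb' : j.val ≠ 2 * l + 3 := by simpa [Fin.ext_iff] using hjb
    simp only [toda1C, Matrix.of_apply]
    rw [if_neg (by omega), if_neg (by omega), zero_mul]

lemma row_top (x : Fin (2 * k + 1) → ℂ) (l : ℕ) (hl : l + 1 = k) :
    (toda1C k v).mulVec x ⟨2 * l + 2, by omega⟩
      = v ⟨2 * l + 1, by omega⟩ * x ⟨2 * l + 1, by omega⟩ := by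
  have ha : (2 * l + 1 : ℕ) < 2 * k + 1 := by omega
  simp only [Matrix.mulVec, dotProduct]
  rw [sum_eq_single' _ ⟨2 * l + 1, ha⟩]
  · have hodd : ¬ Even (2 * l + 1) := by rw [Nat.even_iff]; omega
    have hc1 : ¬ (2 * l + 1 = 2 * l + 2 + 1) := by omega
    have hc3 : (2 * l + 2 = 2 * l + 1 + 1) := by omega
    simp only [toda1C, Matrix.of_apply]
    simp only [if_neg hc1, if_pos hc3, if_neg hodd, eq_self_iff_true, if_true]
  · intro j hj
    have hj' : j.val ≠ 2 * l + 1 := by simpa [Fin.ext_iff] using hj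
    have : j.val < 2 * k + 1 := j.isLt
    simp only [toda1C, Matrix.of_apply]
    rw [if_neg (by omega), if_neg (by omega), zero_mul]


lemma ker_iff (hk : 1 ≤ k) (x : Fin (2 * k + 1) → ℂ) :
    (toda1C k v).mulVec x = 0 ↔
      ∀ l : ℕ, (hl : l < k) → v ⟨2 * l + 1, by omega⟩ ≠ 0 →
        x ⟨2 * l + 1, by omega⟩ = 0 ∧ x ⟨2 * l + 2, by omega⟩ = x ⟨2 * l, by omega⟩ := by
  constructor
  · intro h
    have key : ∀ l, (hl : l < k) → v ⟨2 * l + 1, by omega⟩ * x ⟨2 * l + 1, by omega⟩ = 0 := by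
      intro l
      induction l with
      | zero =>
        intro hl
        have h0 : (toda1C k v).mulVec x ⟨0, by omega⟩ = 0 := by rw [h]; rfl
        rw [row_zero v hk x] at h0
        exact neg_eq_zero.mp h0
      | succ l ih =>
        intro hl
        have h0 : (toda1C k v).mulVec x ⟨2 * l + 2, by omega⟩ = 0 := by rw [h]; rfl
        rw [row_even_mid v x l hl] at h0
        have := ih (by omega)
        rw [this, zero_sub, neg_eq_zero] at h0
        exact h0
    intro l hl hv
    have hprod := key l hl
    have hx : x ⟨2 * l + 1, by omega⟩ = 0 := by
      rcases mul_eq_zero.mp hprod with h' | h'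
      · exact absurd h' hv
      · exact h'
    refine ⟨hx, ?_⟩
    have h0 : (toda1C k v).mulVec x ⟨2 * l + 1, by omega⟩ = 0 := by rw [h]; rfl
    rw [row_odd v x l hl] at h0
    rcases mul_eq_zero.mp h0 with h' | h'
    · exact absurd h' hv
    · have := sub_eq_zero.mp h'
      exact this.symm
  · intro hc
    funext i
    obtain ⟨m, hm⟩ := i
    have hsplit : m = 0 ∨ (∃ l, m = 2 * l + 1 ∧ l < k) ∨ (∃ l, m = 2 * l + 2 ∧ l + 1 < k)
        ∨ (∃ l, m = 2 * l + 2 ∧ l + 1 = k) := by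
      rcases Nat.even_or_odd m with ⟨t, ht⟩ | ⟨t, ht⟩
      · rcases Nat.eq_zero_or_pos t with rfl | hpos
        · left; omega
        · by_cases htk : t = k
          · right; right; right; exact ⟨t - 1, by omega, by omega⟩
          · right; right; left; exact ⟨t - 1, by omega, by omega⟩
      · right; left; exact ⟨t, by omega, by omega⟩
    have hz : ∀ l, (hl : l < k) → v ⟨2 * l + 1, by omega⟩ * x ⟨2 * l + 1, by omega⟩ = 0 := by
      intro l hl
      rcases eq_or_ne (v ⟨2 * l + 1, by omega⟩) 0 with hv | hv
      · rw [hv, zero_mul]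
      · rw [(hc l hl hv).1, mul_zero]
    rcases hsplit with rfl | ⟨l, rfl, hlk⟩ | ⟨l, rfl, hlk⟩ | ⟨l, rfl, hlk⟩
    · rw [row_zero v hk x]
      have := hz 0 (by omega)
      show -(v ⟨1, by omega⟩ * x ⟨1, by omega⟩) = 0
      rw [neg_eq_zero]
      exact this
    · rw [row_odd v x l hlk]
      rcases eq_or_ne (v ⟨2 * l + 1, by omega⟩) 0 with hv | hv
      · rw [hv, zero_mul]; rfl
      · rw [(hc l hlk hv).2, sub_self, mul_zero]; rfl
    · rw [row_even_mid v x l hlk]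
      have h1 := hz l (by omega)
      have h2 := hz (l + 1) (by omega)
      show v ⟨2 * l + 1, by omega⟩ * x ⟨2 * l + 1, by omega⟩
        - v ⟨2 * l + 3, by omega⟩ * x ⟨2 * l + 3, by omega⟩ = 0
      rw [h1]
      rw [show v ⟨2 * l + 3, by omega⟩ * x ⟨2 * l + 3, by omega⟩
        = v ⟨2 * (l + 1) + 1, by omega⟩ * x ⟨2 * (l + 1) + 1, by omega⟩ from rfl, h2]
      ring
    · rw [row_top v x l hlk]
      exact hz l (by omega)

/-- The comparison map. -/
def phi (k : ℕ) (v : Fin (2 * k + 1) → ℂ) :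
    (Fin (2 * k + 1) → ℂ) →ₗ[ℂ]
      ({l : Fin k // v ⟨2 * l.val + 1, by have := l.isLt; linarith⟩ ≠ 0} → ℂ × ℂ) where
  toFun x l := (x ⟨2 * l.1.val + 1, by have := l.1.isLt; omega⟩,
    x ⟨2 * l.1.val + 2, by have := l.1.isLt; omega⟩ - x ⟨2 * l.1.val, by have := l.1.isLt; omega⟩)
  map_add' x y := by funext l; simp [Prod.ext_iff]; ring
  map_smul' c x := by funext l; simp [Prod.ext_iff]; ring

lemma ker_eq (hk : 1 ≤ k) :
    LinearMap.ker (toda1C k v).mulVecLin = LinearMap.ker (phi k v) := by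
  ext x
  simp only [LinearMap.mem_ker, Matrix.mulVecLin_apply, ker_iff v hk x, phi,
    LinearMap.coe_mk, AddHom.coe_mk, funext_iff, Prod.ext_iff, Pi.zero_apply,
    Prod.fst_zero, Prod.snd_zero, Subtype.forall, sub_eq_zero]
  constructor
  · intro h l hl
    exact h l.val l.isLt hl
  · intro h l hl hv
    exact h ⟨l, hl⟩ hv

lemma range_phi (hk : 1 ≤ k) : LinearMap.range (phi k v) = ⊤ := by
  classical
  rw [eq_top_iff]
  intro y _
  rw [← Finset.univ_sum_single y]
  refine Submodule.sum_mem _ ?_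
  intro w _
  have hdec : Pi.single w (y w)
      = (y w).1 • Pi.single (M := fun _ => ℂ × ℂ) w ((1:ℂ), (0:ℂ))
        + (y w).2 • Pi.single (M := fun _ => ℂ × ℂ) w ((0:ℂ), (1:ℂ)) := by
    rw [← Pi.single_smul, ← Pi.single_smul, ← Pi.single_add]
    congr 1
    simp [Prod.ext_iff]
  rw [hdec]
  refine add_mem (Submodule.smul_mem _ _ ?_) (Submodule.smul_mem _ _ ?_)
  · refine LinearMap.mem_range.mpr
      ⟨Pi.single (⟨2 * w.1.val + 1, by have := w.1.isLt; omega⟩ : Fin (2 * k + 1)) (1 : ℂ), ?_⟩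
    funext l'
    show (_, _) = _
    by_cases hll : l' = w
    · subst hll
      rw [Pi.single_eq_same, Pi.single_eq_same]
      have e1 : Pi.single (M := fun _ : Fin (2 * k + 1) => ℂ)
          (⟨2 * l'.1.val + 1, by have := l'.1.isLt; omega⟩ : Fin (2 * k + 1)) (1 : ℂ)
          (⟨2 * l'.1.val + 2, by have := l'.1.isLt; omega⟩ : Fin (2 * k + 1)) = 0 :=
        Pi.single_eq_of_ne (Fin.ne_of_val_ne (by simp only [Fin.val_mk]; omega)) _
      have e2 : Pi.single (M := fun _ : Fin (2 * k + 1) => ℂ)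
          (⟨2 * l'.1.val + 1, by have := l'.1.isLt; omega⟩ : Fin (2 * k + 1)) (1 : ℂ)
          (⟨2 * l'.1.val, by have := l'.1.isLt; omega⟩ : Fin (2 * k + 1)) = 0 :=
        Pi.single_eq_of_ne (Fin.ne_of_val_ne (by simp only [Fin.val_mk]; omega)) _
      rw [e1, e2]
      norm_num
    · have hvv : l'.1.val ≠ w.1.val := by
        intro hcon
        exact hll (Subtype.ext (Fin.ext hcon))
      rw [Pi.single_eq_of_ne hll]
      have e0 : Pi.single (M := fun _ : Fin (2 * k + 1) => ℂ)
          (⟨2 * w.1.val + 1, by have := w.1.isLt; omega⟩ : Fin (2 * k + 1)) (1 : ℂ)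
          (⟨2 * l'.1.val + 1, by have := l'.1.isLt; omega⟩ : Fin (2 * k + 1)) = 0 :=
        Pi.single_eq_of_ne (Fin.ne_of_val_ne (by simp only [Fin.val_mk]; omega)) _
      have e1 : Pi.single (M := fun _ : Fin (2 * k + 1) => ℂ)
          (⟨2 * w.1.val + 1, by have := w.1.isLt; omega⟩ : Fin (2 * k + 1)) (1 : ℂ)
          (⟨2 * l'.1.val + 2, by have := l'.1.isLt; omega⟩ : Fin (2 * k + 1)) = 0 :=
        Pi.single_eq_of_ne (Fin.ne_of_val_ne (by simp only [Fin.val_mk]; omega)) _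
      have e2 : Pi.single (M := fun _ : Fin (2 * k + 1) => ℂ)
          (⟨2 * w.1.val + 1, by have := w.1.isLt; omega⟩ : Fin (2 * k + 1)) (1 : ℂ)
          (⟨2 * l'.1.val, by have := l'.1.isLt; omega⟩ : Fin (2 * k + 1)) = 0 :=
        Pi.single_eq_of_ne (Fin.ne_of_val_ne (by simp only [Fin.val_mk]; omega)) _
      rw [e0, e1, e2]
      norm_num
  · refine LinearMap.mem_range.mpr
      ⟨(fun j => if 2 * w.1.val + 2 ≤ j.val ∧ j.val % 2 = 0 then 1 else 0), ?_⟩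
    funext l'
    show (_, _) = _
    have c1 : ¬ (2 * w.1.val + 2 ≤ 2 * l'.1.val + 1 ∧ (2 * l'.1.val + 1) % 2 = 0) := by omega
    by_cases hll : l' = w
    · subst hll
      rw [Pi.single_eq_same]
      have c2 : (2 * l'.1.val + 2 ≤ 2 * l'.1.val + 2 ∧ (2 * l'.1.val + 2) % 2 = 0) := by omega
      have c3 : ¬ (2 * l'.1.val + 2 ≤ 2 * l'.1.val ∧ (2 * l'.1.val) % 2 = 0) := by omega
      simp only [Fin.val_mk, if_neg c1, if_pos c2, if_neg c3]
      norm_num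
    · have hvv : l'.1.val ≠ w.1.val := by
        intro hcon
        exact hll (Subtype.ext (Fin.ext hcon))
      rw [Pi.single_eq_of_ne hll]
      have hd : (if 2 * w.1.val + 2 ≤ 2 * l'.1.val + 2 ∧ (2 * l'.1.val + 2) % 2 = 0
            then (1:ℂ) else 0)
          = (if 2 * w.1.val + 2 ≤ 2 * l'.1.val ∧ (2 * l'.1.val) % 2 = 0 then (1:ℂ) else 0) := by
        by_cases hle : w.1.val < l'.1.val
        · rw [if_pos (by omega), if_pos (by omega)]
        · rw [if_neg (by omega), if_neg (by omega)]
      simp only [Fin.val_mk, if_neg c1, hd]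
      norm_num

end Toda1Aux

set_option maxHeartbeats 1000000 in
/-- the rank of `Π₁(v)` is `2k - 2d`, where `d` is the number of
vanishing odd coordinates `v_{2l+1}`, `0 ≤ l ≤ k-1`. -/
theorem toda1_rank (k : ℕ) (hk : 1 ≤ k) (v : Fin (2 * k + 1) → ℂ) :
    (toda1C k v).rank
      = 2 * k - 2 * Nat.card
          {l : Fin k // v (⟨2 * l.val + 1, by have := l.isLt; omega⟩ : Fin (2 * k + 1)) = 0} := by
  classical
  have h1 := LinearMap.finrank_range_add_finrank_ker (toda1C k v).mulVecLin
  have h2 := LinearMap.finrank_range_add_finrank_ker (Toda1Aux.phi k v)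
  rw [Toda1Aux.ker_eq v hk] at h1
  have hr : (toda1C k v).rank
      = Module.finrank ℂ (LinearMap.range ((toda1C k v).mulVecLin)) := rfl
  rw [Toda1Aux.range_phi v hk, finrank_top, Module.finrank_pi_fintype,
    Finset.sum_const, Module.finrank_prod, Module.finrank_self, smul_eq_mul, Finset.card_univ] at h2
  have hcompl : Fintype.card {l : Fin k // v ⟨2 * l.val + 1, by have := l.isLt; omega⟩ ≠ 0}
      = k - Fintype.card {l : Fin k // v ⟨2 * l.val + 1, by have := l.isLt; omega⟩ = 0} := by
    have := Fintype.card_subtype_compl (fun l : Fin k =>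
      v ⟨2 * l.val + 1, by have := l.isLt; omega⟩ = 0)
    simpa using this
  have hle : Fintype.card {l : Fin k // v ⟨2 * l.val + 1, by have := l.isLt; omega⟩ = 0} ≤ k := by
    simpa using Fintype.card_subtype_le (fun l : Fin k =>
      v ⟨2 * l.val + 1, by have := l.isLt; omega⟩ = 0)
  rw [Nat.card_eq_fintype_card]
  omega
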